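/- arXiv:1501.07157 — 2 statements merged into one kernel-verified Lean document; each statement's English description precedes it below -/
import Mathlib

section
/- Let a₁,a₂,a₃,a₄ > 0 satisfy the quadrilateral inequalities and be elliptic (a₁ ± a₂ ± a₃ ± a₄ ≠ 0 for all signs). Set s = (a₁+a₂+a₃+a₄)/2, āᵢ = s - aᵢ, and m = 1 - (a₁a₂a₃a₄)/(ā₁ā₂ā₃ā₄). Then m ∉ {0, 1}, and m = -s(s-a₂-a₃)(s-a₂-a₄)(s-a₃-a₄)/(ā₁ā₂ā₃ā₄). -/
theorem stmt11 (a₁ a₂ a₃ a₄ : ℝ)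
    (h₁ : 0 < a₁) (h₂ : 0 < a₂) (h₃ : 0 < a₃) (h₄ : 0 < a₄)
    (q₁ : a₁ < a₂ + a₃ + a₄) (q₂ : a₂ < a₁ + a₃ + a₄)
    (q₃ : a₃ < a₁ + a₂ + a₄) (q₄ : a₄ < a₁ + a₂ + a₃)
    (hell : ∀ e₂ e₃ e₄ : ℝ, (e₂ = 1 ∨ e₂ = -1) → (e₃ = 1 ∨ e₃ = -1) →
      (e₄ = 1 ∨ e₄ = -1) → a₁ + e₂ * a₂ + e₃ * a₃ + e₄ * a₄ ≠ 0) :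
    let s := (a₁ + a₂ + a₃ + a₄) / 2
    let m := 1 - a₁ * a₂ * a₃ * a₄ / ((s - a₁) * (s - a₂) * (s - a₃) * (s - a₄))
    m ≠ 0 ∧ m ≠ 1 ∧
      m = -(s * (s - a₂ - a₃) * (s - a₂ - a₄) * (s - a₃ - a₄)) /
        ((s - a₁) * (s - a₂) * (s - a₃) * (s - a₄)) := by
  intro s m
  have hb₁ : 0 < s - a₁ := by show 0 < (a₁ + a₂ + a₃ + a₄) / 2 - a₁; linarith
  have hb₂ : 0 < s - a₂ := by show 0 < (a₁ + a₂ + a₃ + a₄) / 2 - a₂; linarith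
  have hb₃ : 0 < s - a₃ := by show 0 < (a₁ + a₂ + a₃ + a₄) / 2 - a₃; linarith
  have hb₄ : 0 < s - a₄ := by show 0 < (a₁ + a₂ + a₃ + a₄) / 2 - a₄; linarith
  have hs : 0 < s := by show 0 < (a₁ + a₂ + a₃ + a₄) / 2; linarith
  have hD : (s - a₁) * (s - a₂) * (s - a₃) * (s - a₄) ≠ 0 := by positivity
  have h23 : s - a₂ - a₃ ≠ 0 := by
    have h := hell (-1) (-1) 1 (Or.inr rfl) (Or.inr rfl) (Or.inl rfl)
    show (a₁ + a₂ + a₃ + a₄) / 2 - a₂ - a₃ ≠ 0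
    intro hc; apply h; linarith
  have h24 : s - a₂ - a₄ ≠ 0 := by
    have h := hell (-1) 1 (-1) (Or.inr rfl) (Or.inl rfl) (Or.inr rfl)
    show (a₁ + a₂ + a₃ + a₄) / 2 - a₂ - a₄ ≠ 0
    intro hc; apply h; linarith
  have h34 : s - a₃ - a₄ ≠ 0 := by
    have h := hell 1 (-1) (-1) (Or.inl rfl) (Or.inr rfl) (Or.inr rfl)
    show (a₁ + a₂ + a₃ + a₄) / 2 - a₃ - a₄ ≠ 0
    intro hc; apply h; linarith
  have key : m = -(s * (s - a₂ - a₃) * (s - a₂ - a₄) * (s - a₃ - a₄)) /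
      ((s - a₁) * (s - a₂) * (s - a₃) * (s - a₄)) := by
    show (1 : ℝ) - _ = _
    rw [eq_div_iff hD, sub_mul, div_mul_cancel₀ _ hD, one_mul]
    show _ = -((a₁ + a₂ + a₃ + a₄) / 2 * _ * _ * _)
    ring
  refine ⟨?_, ?_, key⟩
  · rw [key]
    exact div_ne_zero (by simp only [neg_ne_zero]; exact mul_ne_zero (mul_ne_zero (mul_ne_zero hs.ne' h23) h24) h34) hD
  · show (1 : ℝ) - _ ≠ 1
    have : a₁ * a₂ * a₃ * a₄ / ((s - a₁) * (s - a₂) * (s - a₃) * (s - a₄)) ≠ 0 :=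
      div_ne_zero (by positivity) hD
    intro hc; apply this; linarith
end

section
/- For any reals a,b,c,d with ā = s-a etc. (s = (a+b+c+d)/2): sin a·sin b·sin c·sin d + cos a·cos b·cos c·cos d = sin ā·sin b̄·sin c̄·sin d̄ + cos ā·cos b̄·cos c̄·cos d̄. -/
open Real

lemma key18 (x y z w : ℝ) :
    Real.sin x * Real.sin y * Real.sin z * Real.sin w +
      Real.cos x * Real.cos y * Real.cos z * Real.cos w =
    (Real.cos (x - y) * Real.cos (z - w) + Real.cos (x + y) * Real.cos (z + w)) / 2 := by
  rw [Real.cos_sub, Real.cos_sub, Real.cos_add, Real.cos_add]; ring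

theorem stmt18 (a b c d : ℝ) (s : ℝ) (hs : s = (a + b + c + d) / 2) :
    Real.sin a * Real.sin b * Real.sin c * Real.sin d +
        Real.cos a * Real.cos b * Real.cos c * Real.cos d =
      Real.sin (s - a) * Real.sin (s - b) * Real.sin (s - c) * Real.sin (s - d) +
        Real.cos (s - a) * Real.cos (s - b) * Real.cos (s - c) * Real.cos (s - d) := by
  subst hs
  rw [key18, key18]
  have h1 : (a + b + c + d) / 2 - a - ((a + b + c + d) / 2 - b) = -(a - b) := by ring
  have h2 : (a + b + c + d) / 2 - a + ((a + b + c + d) / 2 - b) = c + d := by ring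
  have h3 : (a + b + c + d) / 2 - c - ((a + b + c + d) / 2 - d) = -(c - d) := by ring
  have h4 : (a + b + c + d) / 2 - c + ((a + b + c + d) / 2 - d) = a + b := by ring
  rw [h1, h2, h3, h4, Real.cos_neg, Real.cos_neg]
  ring
end
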